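/- Let F be a propositional formula in 3-CNF with variables x_1,…,x_M and clauses C_1,…,C_L, each clause containing exactly three literals. Let the alphabet be Σ = {α_1,…,α_M} ∪ {β_1,…,β_L}. Construct the episode G as follows: it has nodes p_1,…,p_M with lab(p_i) = α_i, nodes n_1,…,n_M with lab(n_i) = α_i, and nodes c_1,…,c_{3L} with lab(c_{3j−2}) = lab(c_{3j−1}) = lab(c_{3j}) = β_j, each node carrying a single event; for each clause C_j and each k ∈ {1,2,3}, if the k-th literal of C_j involves variable x_i, add a proper edge from p_i to c_{3j+k−3} when the literal is positive and from n_i to c_{3j+k−3} when it is negative; G has no other edges. Let s be the sequence of 2M + 3L events with strictly increasing timestamps whose labels, in order, are α_1,…,α_M, β_1,…,β_L, α_1,…,α_M, β_1,…,β_L, β_1,…,β_L. Then s covers G if and only if F is satisfiable. -/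

import Mathlib

/-- A sequence event: a unique id, a label (from alphabet encoded as `ℕ`),
and an integer time stamp. -/
structure SeqEvent where
  id : ℕ
  lab : ℕ
  ts : ℤ
deriving DecidableEq

/-- An event sequence: a finite collection of sequence events with distinct ids,
whose time stamps are monotone in the ids. -/
structure EventSeq where
  events : Finset SeqEvent
  id_inj : ∀ e ∈ events, ∀ f ∈ events, e.id = f.id → e = f
  ts_mono : ∀ e ∈ events, ∀ f ∈ events, e.id ≤ f.id → e.ts ≤ f.ts

/-- An episode: a finite set of episode events (identified by ids in `ℕ`) with labels,
a finite set of graph nodes, a map from events to nodes (surjectivity and the DAG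
property are recorded in `Episode.WellFormed`), and weak and proper edges. -/
structure Episode where
  events : Finset ℕ
  lab : ℕ → ℕ
  nodes : Finset ℕ
  node : ℕ → ℕ
  weak : ℕ → ℕ → Prop
  proper : ℕ → ℕ → Prop

namespace Episode

/-- An edge of the episode graph (weak or proper). -/
def edge (G : Episode) (a b : ℕ) : Prop := G.weak a b ∨ G.proper a b

/-- `G.Desc m n` : `n` is a descendant of `m`, i.e. there is a directed path from `m` to `n`. -/
def Desc (G : Episode) (m n : ℕ) : Prop := Relation.TransGen G.edge m n

/-- `G.PDesc m n` : `n` is a proper descendant of `m`, i.e. some directed path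
from `m` to `n` contains a proper edge. -/
def PDesc (G : Episode) (m n : ℕ) : Prop :=
  ∃ a b, Relation.ReflTransGen G.edge m a ∧ G.proper a b ∧ Relation.ReflTransGen G.edge b n

/-- Well-formedness of an episode: events map into the nodes, every node carries an
event, edges run between nodes, the weak and proper edges are disjoint, and the
graph is acyclic (a DAG). -/
structure WellFormed (G : Episode) : Prop where
  node_mem : ∀ e ∈ G.events, G.node e ∈ G.nodes
  node_surj : ∀ n ∈ G.nodes, ∃ e ∈ G.events, G.node e = n
  weak_mem : ∀ a b, G.weak a b → a ∈ G.nodes ∧ b ∈ G.nodes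
  proper_mem : ∀ a b, G.proper a b → a ∈ G.nodes ∧ b ∈ G.nodes
  weak_proper_disjoint : ∀ a b, G.weak a b → G.proper a b → False
  acyclic : ∀ n, ¬ G.Desc n n

/-- The transitive closure of an episode: add an edge from every node to each of its
descendants, proper if the descendant is a proper descendant, weak otherwise. -/
def tcl (G : Episode) : Episode :=
  { G with
    proper := fun a b => G.PDesc a b
    weak := fun a b => G.Desc a b ∧ ¬ G.PDesc a b }

/-- An episode is transitively closed if it coincides with its transitive closure. -/
def TransClosed (G : Episode) : Prop :=
  (∀ a b, G.proper a b ↔ G.PDesc a b) ∧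
  (∀ a b, G.weak a b ↔ (G.Desc a b ∧ ¬ G.PDesc a b))

end Episode

/-- `m` is a coverage mapping of episode `G` into sequence `s`: an injective map from
the episode events into the sequence events preserving labels, mapping events of one
node to a common time stamp, and respecting weak and proper edges. -/
def IsCoverMap (s : EventSeq) (G : Episode) (m : ℕ → SeqEvent) : Prop :=
  (∀ e ∈ G.events, m e ∈ s.events) ∧
  Set.InjOn m ↑G.events ∧
  (∀ e ∈ G.events, (m e).lab = G.lab e) ∧
  (∀ e ∈ G.events, ∀ f ∈ G.events, G.node e = G.node f → (m e).ts = (m f).ts) ∧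
  (∀ e ∈ G.events, ∀ f ∈ G.events, G.Desc (G.node f) (G.node e) → (m f).ts ≤ (m e).ts) ∧
  (∀ e ∈ G.events, ∀ f ∈ G.events, G.PDesc (G.node f) (G.node e) → (m f).ts < (m e).ts)

/-- A sequence `s` covers an episode `G`. -/
def Covers (s : EventSeq) (G : Episode) : Prop := ∃ m, IsCoverMap s G m

/-- `G ⪯ H` : every sequence covering `H` also covers `G`. -/
def Subepisode (G H : Episode) : Prop := ∀ s : EventSeq, Covers s H → Covers s G

/-- `G ∼ H` : `G ⪯ H` and `H ⪯ G`. -/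
def EpisodeSimilar (G H : Episode) : Prop := Subepisode G H ∧ Subepisode H G

/-- The window `s[i, j]`: the subsequence of events with time stamps in `[i, j]`. -/
def EventSeq.window (s : EventSeq) (i j : ℤ) : EventSeq where
  events := s.events.filter (fun e => i ≤ e.ts ∧ e.ts ≤ j)
  id_inj := fun e he f hf h =>
    s.id_inj e (Finset.mem_filter.mp he).1 f (Finset.mem_filter.mp hf).1 h
  ts_mono := fun e he f hf h =>
    s.ts_mono e (Finset.mem_filter.mp he).1 f (Finset.mem_filter.mp hf).1 h

/-- The support `fr(G; s)` with window size `ρ`: the number of integers `t` such that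
the window `s[t, t + ρ - 1]` covers `G` (as an extended natural number). -/
noncomputable def support (ρ : ℤ) (s : EventSeq) (G : Episode) : ℕ∞ :=
  {t : ℤ | Covers (s.window t (t + ρ - 1)) G}.encard

/-- `first(i)` : the smallest time stamp in the range of the instance. -/
noncomputable def instFirst (G : Episode) (m : ℕ → SeqEvent) : ℤ :=
  sInf ((fun e => (m e).ts) '' ↑G.events)

/-- `last(i)` : the largest time stamp in the range of the instance. -/
noncomputable def instLast (G : Episode) (m : ℕ → SeqEvent) : ℤ :=
  sSup ((fun e => (m e).ts) '' ↑G.events)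

/-- `m` is an instance of `G` in `s` (with window size `ρ`): a coverage mapping of `G`
into `s` such that no used sequence event can be replaced by an unused one with the same
label, the same time stamp and a smaller id, and whose span is less than `ρ`. -/
def IsInstance (ρ : ℤ) (s : EventSeq) (G : Episode) (m : ℕ → SeqEvent) : Prop :=
  IsCoverMap s G m ∧
  (∀ e ∈ G.events, ∀ f ∈ s.events, (∀ e' ∈ G.events, m e' ≠ f) →
      f.lab = (m e).lab → f.ts = (m e).ts → ¬ f.id < (m e).id) ∧
  instLast G m - instFirst G m ≤ ρ - 1

/-- Labels: `α i = i` for the `M` variables, `β j = M + j` for the `L` clauses.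
The episode events/nodes are `p i = i`, `n i = M + i` (both labelled `α i`), and
`c t = 2M + t` for `t < 3L`, where `c (3j + k)` is labelled `β j`. -/
def satLab (M : ℕ) (e : ℕ) : ℕ :=
  if e < M then e else if e < 2 * M then e - M else M + (e - 2 * M) / 3

/-- The episode `G` built from a 3-CNF formula with `M` variables and `L` clauses.
`lit j k = (i, pos)` means that the `k`-th literal (`k < 3`) of the `j`-th clause
(`j < L`) involves variable `x i`, positively if `pos = true`. Each node carries a
single event; for each clause `j` and `k < 3` there is a proper edge from `p i`
(if the literal is positive) or from `n i` (if negative) to `c (3j + k)`; there are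
no other edges. -/
def satEpisode (M L : ℕ) (lit : ℕ → ℕ → ℕ × Bool) : Episode where
  events := Finset.range (2 * M + 3 * L)
  lab := satLab M
  nodes := Finset.range (2 * M + 3 * L)
  node := id
  weak := fun _ _ => False
  proper := fun a b => ∃ j < L, ∃ k < 3,
    b = 2 * M + 3 * j + k ∧
    a = (if (lit j k).2 then (lit j k).1 else M + (lit j k).1)

/-- The labels, in order, of the sequence
`α 0, …, α (M-1), β 0, …, β (L-1), α 0, …, α (M-1), β 0, …, β (L-1), β 0, …, β (L-1)`. -/
def satSeqLab (M L : ℕ) (t : ℕ) : ℕ :=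
  if t < M then t
  else if t < M + L then M + (t - M)
  else if t < 2 * M + L then t - (M + L)
  else if t < 2 * M + 2 * L then M + (t - (2 * M + L))
  else M + (t - (2 * M + 2 * L))

/-- The sequence `s` of `2M + 3L` events with strictly increasing time stamps whose
labels, in order, are `α_1 … α_M β_1 … β_L α_1 … α_M β_1 … β_L β_1 … β_L`. -/
def satSeq (M L : ℕ) : EventSeq where
  events := (Finset.range (2 * M + 3 * L)).image (fun t => ⟨t, satSeqLab M L t, (t : ℤ)⟩)
  id_inj := by
    intro e he f hf h
    simp only [Finset.mem_image] at he hf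
    obtain ⟨t, _, rfl⟩ := he
    obtain ⟨u, _, rfl⟩ := hf
    simp only [SeqEvent.mk.injEq] at h ⊢
    simp_all
  ts_mono := by
    intro e he f hf h
    simp only [Finset.mem_image] at he hf
    obtain ⟨t, _, rfl⟩ := he
    obtain ⟨u, _, rfl⟩ := hf
    simp only [] at h ⊢
    exact_mod_cast h

section SatAux

variable {M L : ℕ} {lit : ℕ → ℕ → ℕ × Bool}

lemma satProper_bounds (hvar : ∀ j < L, ∀ k < 3, (lit j k).1 < M) {a b : ℕ}
    (h : (satEpisode M L lit).proper a b) : a < 2*M ∧ 2*M ≤ b ∧ b < 2*M + 3*L := by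
  obtain ⟨j, hj, k, hk, rfl, rfl⟩ := h
  have := hvar j hj k hk
  split_ifs <;> omega

lemma satEdge_iff (a b : ℕ) :
    (satEpisode M L lit).edge a b ↔ (satEpisode M L lit).proper a b := by
  simp [Episode.edge, satEpisode]

lemma satDesc_iff (hvar : ∀ j < L, ∀ k < 3, (lit j k).1 < M) (a b : ℕ) :
    (satEpisode M L lit).Desc a b ↔ (satEpisode M L lit).proper a b := by
  constructor
  · intro h
    induction h with
    | single h => exact (satEdge_iff _ _).mp h
    | tail _ e ih =>
        have h1 := (satProper_bounds hvar ih).2.1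
        have h2 := (satProper_bounds hvar ((satEdge_iff _ _).mp e)).1
        omega
  · intro h; exact Relation.TransGen.single ((satEdge_iff _ _).mpr h)

lemma satRTG_high (hvar : ∀ j < L, ∀ k < 3, (lit j k).1 < M) {u v : ℕ}
    (h : Relation.ReflTransGen (satEpisode M L lit).edge u v) (hu : 2*M ≤ u) : u = v := by
  rcases h.cases_head with rfl | ⟨c, hc, _⟩
  · rfl
  · have := (satProper_bounds hvar ((satEdge_iff _ _).mp hc)).1
    omega

lemma satPDesc_iff (hvar : ∀ j < L, ∀ k < 3, (lit j k).1 < M) (a b : ℕ) :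
    (satEpisode M L lit).PDesc a b ↔ (satEpisode M L lit).proper a b := by
  constructor
  · rintro ⟨x, y, h1, h2, h3⟩
    have hy := (satProper_bounds hvar h2).2.1
    have hyb := satRTG_high hvar h3 hy
    rcases h1.cases_head with rfl | ⟨c, hc, hcx⟩
    · exact hyb ▸ h2
    · have hc2 := (satProper_bounds hvar ((satEdge_iff _ _).mp hc)).2.1
      have := satRTG_high hvar hcx hc2
      have := (satProper_bounds hvar h2).1
      omega
  · intro h
    exact ⟨a, b, Relation.ReflTransGen.refl, h, Relation.ReflTransGen.refl⟩

lemma mem_satSeq {f : SeqEvent} :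
    f ∈ (satSeq M L).events ↔ ∃ t < 2*M + 3*L, f = ⟨t, satSeqLab M L t, (t : ℤ)⟩ := by
  simp only [satSeq, Finset.mem_image, Finset.mem_range]
  constructor
  · rintro ⟨t, ht, rfl⟩; exact ⟨t, by omega, rfl⟩
  · rintro ⟨t, ht, rfl⟩; exact ⟨t, by omega, rfl⟩

lemma satSeqLab_alpha {i t : ℕ} (hi : i < M) (ht : t < 2*M + 3*L)
    (h : satSeqLab M L t = i) : t = i ∨ t = M + L + i := by
  unfold satSeqLab at h; split_ifs at h <;> omega

lemma satSeqLab_beta {j t : ℕ} (hj : j < L) (ht : t < 2*M + 3*L)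
    (h : satSeqLab M L t = M + j) :
    t = M + j ∨ t = 2*M + L + j ∨ t = 2*M + 2*L + j := by
  unfold satSeqLab at h; split_ifs at h <;> omega

/-- The position in the sequence to which episode event `e` is mapped, given a truth
assignment `τ` and for each clause `j` a chosen satisfied literal index `kj j`. -/
def satPos (M L : ℕ) (τ : ℕ → Bool) (kj : ℕ → ℕ) (e : ℕ) : ℕ :=
  if e < M then (if τ e then e else M + L + e)
  else if e < 2*M then (if τ (e - M) then M + L + (e - M) else e - M)
  else if (e - 2*M) % 3 = kj ((e - 2*M) / 3) then M + (e - 2*M) / 3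
  else if (e - 2*M) % 3 = 0 then
    (if kj ((e - 2*M) / 3) = 1 then 2*M + L + (e - 2*M) / 3 else 2*M + 2*L + (e - 2*M) / 3)
  else if (e - 2*M) % 3 = 1 then 2*M + L + (e - 2*M) / 3
  else 2*M + 2*L + (e - 2*M) / 3

lemma satPos_lt {τ : ℕ → Bool} {kj : ℕ → ℕ} {e : ℕ} (he : e < 2*M + 3*L) :
    satPos M L τ kj e < 2*M + 3*L := by
  unfold satPos; split_ifs <;> omega

lemma satSeqLab_satPos {τ : ℕ → Bool} {kj : ℕ → ℕ} {e : ℕ} (he : e < 2*M + 3*L) :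
    satSeqLab M L (satPos M L τ kj e) = satLab M e := by
  unfold satPos
  split_ifs <;> (unfold satSeqLab satLab; split_ifs <;> omega)

set_option maxHeartbeats 2000000 in
lemma satPos_injOn {τ : ℕ → Bool} {kj : ℕ → ℕ} (hkj : ∀ j < L, kj j < 3)
    {a b : ℕ} (ha : a < 2*M + 3*L) (hb : b < 2*M + 3*L)
    (h : satPos M L τ kj a = satPos M L τ kj b) : a = b := by
  rcases lt_or_ge a (2*M) with ha2 | ha2 <;> rcases lt_or_ge b (2*M) with hb2 | hb2
  · rcases lt_or_ge a M with haM | haM <;> rcases lt_or_ge b M with hbM | hbM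
    · rcases eq_or_ne a b with rfl | hne
      · rfl
      · unfold satPos at h; split_ifs at h <;> omega
    · obtain ⟨i, rfl⟩ : ∃ i, b = M + i := ⟨b - M, by omega⟩
      have hi : M + i - M = i := by omega
      unfold satPos at h; rw [hi] at h
      rcases eq_or_ne a i with rfl | hne
      · split_ifs at h <;> omega
      · split_ifs at h <;> omega
    · obtain ⟨i, rfl⟩ : ∃ i, a = M + i := ⟨a - M, by omega⟩
      have hi : M + i - M = i := by omega
      unfold satPos at h; rw [hi] at h
      rcases eq_or_ne i b with rfl | hne
      · split_ifs at h <;> omega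
      · split_ifs at h <;> omega
    · obtain ⟨i, rfl⟩ : ∃ i, a = M + i := ⟨a - M, by omega⟩
      obtain ⟨i', rfl⟩ : ∃ i', b = M + i' := ⟨b - M, by omega⟩
      have hi : M + i - M = i := by omega
      have hi' : M + i' - M = i' := by omega
      unfold satPos at h; rw [hi, hi'] at h
      rcases eq_or_ne i i' with rfl | hne
      · rfl
      · split_ifs at h <;> omega
  · have h2 := hkj ((b - 2*M)/3) (by omega)
    unfold satPos at h; split_ifs at h <;> omega
  · have h1 := hkj ((a - 2*M)/3) (by omega)
    unfold satPos at h; split_ifs at h <;> omega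
  · have h1 := hkj ((a - 2*M)/3) (by omega)
    have h2 := hkj ((b - 2*M)/3) (by omega)
    by_cases hjj : (a - 2*M)/3 = (b - 2*M)/3
    · unfold satPos at h; rw [hjj] at h; split_ifs at h <;> omega
    · unfold satPos at h; split_ifs at h <;> omega

lemma satPos_order {τ : ℕ → Bool} {kj : ℕ → ℕ}
    (hvar : ∀ j < L, ∀ k < 3, (lit j k).1 < M)
    (hkj : ∀ j < L, kj j < 3 ∧ τ (lit j (kj j)).1 = (lit j (kj j)).2)
    {a b : ℕ} (h : (satEpisode M L lit).proper a b) :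
    satPos M L τ kj a < satPos M L τ kj b := by
  obtain ⟨j, hj, k, hk, rfl, rfl⟩ := h
  have hiM := hvar j hj k hk
  obtain ⟨hj3, hjw⟩ := hkj j hj
  have hd : (2*M + 3*j + k - 2*M) / 3 = j := by omega
  have hm : (2*M + 3*j + k - 2*M) % 3 = k := by omega
  have hposb : satPos M L τ kj (2*M + 3*j + k) =
      (if k = kj j then M + j
       else if k = 0 then (if kj j = 1 then 2*M + L + j else 2*M + 2*L + j)
       else if k = 1 then 2*M + L + j else 2*M + 2*L + j) := by
    unfold satPos
    rw [if_neg (by omega), if_neg (by omega), hd, hm]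
  by_cases hkk : k = kj j
  · have hτ : τ (lit j k).1 = (lit j k).2 := by rw [hkk]; exact hjw
    rw [hposb, if_pos hkk]
    rcases hb : (lit j k).2 with _ | _ <;> rw [hb] at hτ <;>
      simp only [if_true, Bool.false_eq_true, if_false]
    · have : satPos M L τ kj (M + (lit j k).1) = (lit j k).1 := by
        unfold satPos
        rw [if_neg (by omega), if_pos (by omega), Nat.add_sub_cancel_left, hτ]
        simp
      omega
    · have : satPos M L τ kj ((lit j k).1) = (lit j k).1 := by
        unfold satPos
        rw [if_pos hiM, hτ]
        simp
      omega
  · have hbge : 2*M + L + j ≤ satPos M L τ kj (2*M + 3*j + k) := by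
      rw [hposb, if_neg hkk]; split_ifs <;> omega
    rcases hb : (lit j k).2 with _ | _ <;>
      simp only [if_true, Bool.false_eq_true, if_false]
    · have : satPos M L τ kj (M + (lit j k).1) ≤ M + L + (lit j k).1 := by
        unfold satPos
        rw [if_neg (by omega), if_pos (by omega), Nat.add_sub_cancel_left]
        split_ifs <;> omega
      omega
    · have : satPos M L τ kj ((lit j k).1) ≤ M + L + (lit j k).1 := by
        unfold satPos
        rw [if_pos hiM]
        split_ifs <;> omega
      omega

end SatAux

/-- Theorem 1 of the paper, the reduction: for a 3-CNF formula `F` with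
`M` variables and `L` clauses (each clause having exactly three literals, given by
`lit`), the sequence `satSeq M L` covers the episode `satEpisode M L lit` if and only
if `F` is satisfiable. -/
theorem satSeq_covers_iff_satisfiable (M L : ℕ) (lit : ℕ → ℕ → ℕ × Bool)
    (hvar : ∀ j < L, ∀ k < 3, (lit j k).1 < M) :
    Covers (satSeq M L) (satEpisode M L lit) ↔
      ∃ τ : ℕ → Bool, ∀ j < L, ∃ k < 3, τ (lit j k).1 = (lit j k).2 := by
  constructor
  · rintro ⟨m, hmem, hinj, hlab, -, -, hpd⟩
    refine ⟨fun i => decide ((m i).ts = (i : ℤ)), ?_⟩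
    intro j hj
    have hev : ∀ e, e < 2*M + 3*L → e ∈ (satEpisode M L lit).events := by
      intro e he; simpa [satEpisode] using he
    have hct : ∀ r, r < 3 → ∃ t, (t = M + j ∨ t = 2*M + L + j ∨ t = 2*M + 2*L + j) ∧
        m (2*M + 3*j + r) = ⟨t, satSeqLab M L t, (t : ℤ)⟩ := by
      intro r hr
      have hevr : (2*M + 3*j + r) ∈ (satEpisode M L lit).events := hev _ (by omega)
      obtain ⟨t, ht, hte⟩ := mem_satSeq.mp (hmem _ hevr)
      have hl : satSeqLab M L t = M + j := by
        have h1 := hlab _ hevr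
        rw [hte] at h1
        have h2 : satLab M (2*M + 3*j + r) = M + j := by
          unfold satLab; split_ifs <;> omega
        simpa [satEpisode, h2] using h1
      exact ⟨t, satSeqLab_beta hj ht hl, hte⟩
    obtain ⟨t0, ht0, he0⟩ := hct 0 (by norm_num)
    obtain ⟨t1, ht1, he1⟩ := hct 1 (by norm_num)
    obtain ⟨t2, ht2, he2⟩ := hct 2 (by norm_num)
    have hdist : ∀ r r' t, r < 3 → r' < 3 →
        m (2*M + 3*j + r) = ⟨t, satSeqLab M L t, (t : ℤ)⟩ →
        m (2*M + 3*j + r') = ⟨t, satSeqLab M L t, (t : ℤ)⟩ → r = r' := by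
      intro r r' t hr hr' h1 h2
      have := hinj (Finset.mem_coe.mpr (hev _ (by omega)))
        (Finset.mem_coe.mpr (hev _ (by omega))) (h1.trans h2.symm)
      omega
    have hd01 : t0 ≠ t1 := fun h => by
      subst h; exact absurd (hdist 0 1 t0 (by norm_num) (by norm_num) he0 he1) (by norm_num)
    have hd02 : t0 ≠ t2 := fun h => by
      subst h; exact absurd (hdist 0 2 t0 (by norm_num) (by norm_num) he0 he2) (by norm_num)
    have hd12 : t1 ≠ t2 := fun h => by
      subst h; exact absurd (hdist 1 2 t1 (by norm_num) (by norm_num) he1 he2) (by norm_num)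
    have hwit : ∃ r, r < 3 ∧ m (2*M + 3*j + r) = ⟨M + j, satSeqLab M L (M + j), ((M : ℤ) + j)⟩ := by
      have : t0 = M + j ∨ t1 = M + j ∨ t2 = M + j := by omega
      rcases this with h | h | h
      · exact ⟨0, by norm_num, by subst h; rw [he0]; norm_num⟩
      · exact ⟨1, by norm_num, by subst h; rw [he1]; norm_num⟩
      · exact ⟨2, by norm_num, by subst h; rw [he2]; norm_num⟩
    obtain ⟨r, hr3, hmr⟩ := hwit
    refine ⟨r, hr3, ?_⟩
    set i := (lit j r).1 with hidef
    have hiM : i < M := hvar j hj r hr3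
    have hprop : (satEpisode M L lit).proper
        (if (lit j r).2 then i else M + i) (2*M + 3*j + r) :=
      ⟨j, hj, r, hr3, rfl, rfl⟩
    have hpdesc : (satEpisode M L lit).PDesc
        (if (lit j r).2 then i else M + i) (2*M + 3*j + r) :=
      (satPDesc_iff hvar _ _).mpr hprop
    -- timestamp of the source
    have hsrc : ∀ a, a ∈ (satEpisode M L lit).events → satLab M a = i →
        (satEpisode M L lit).PDesc a (2*M + 3*j + r) →
        (m a).ts = (i : ℤ) ∧ m a = ⟨i, satSeqLab M L i, (i : ℤ)⟩ := by
      intro a ha hla hpda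
      obtain ⟨s, hs, hse⟩ := mem_satSeq.mp (hmem _ ha)
      have hls : satSeqLab M L s = i := by
        have h1 := hlab _ ha
        rw [hse] at h1
        simpa [satEpisode, hla] using h1
      have hsi := satSeqLab_alpha hiM hs hls
      have hlt := hpd _ (hev _ (by omega)) _ ha hpda
      rw [hmr, hse] at hlt
      simp only at hlt
      have : (s : ℤ) < (M : ℤ) + j := hlt
      have hsMj : s < M + j := by exact_mod_cast this
      have hsval : s = i := by omega
      subst hsval
      exact ⟨by rw [hse], hse⟩
    rcases hb : (lit j r).2 with _ | _
    · -- negative literal: source is M + i, so m (M+i) has ts i; show m i has ts ≠ i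
      rw [hb] at hprop hpdesc
      simp only [Bool.false_eq_true, if_false] at hprop hpdesc
      have hevMi : (M + i) ∈ (satEpisode M L lit).events := hev _ (by omega)
      have hlMi : satLab M (M + i) = i := by unfold satLab; split_ifs <;> omega
      obtain ⟨hts, hmeq⟩ := hsrc (M + i) hevMi hlMi hpdesc
      -- now m i
      have hevi : i ∈ (satEpisode M L lit).events := hev _ (by omega)
      obtain ⟨s, hs, hse⟩ := mem_satSeq.mp (hmem _ hevi)
      have hls : satSeqLab M L s = i := by
        have h1 := hlab _ hevi
        rw [hse] at h1
        have h2 : satLab M i = i := by unfold satLab; split_ifs <;> omega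
        simpa [satEpisode, h2] using h1
      have hsi := satSeqLab_alpha hiM hs hls
      have hsne : s ≠ i := by
        intro hcon
        subst hcon
        have : i = M + i := hinj (Finset.mem_coe.mpr hevi) (Finset.mem_coe.mpr hevMi)
          (by rw [hse, hmeq])
        omega
      have hsv : s = M + L + i := by omega
      subst hsv
      show decide ((m i).ts = (i : ℤ)) = false
      rw [hse]
      simp only
      rw [decide_eq_false]
      intro hcon
      have : (M : ℤ) + L + i = i := by exact_mod_cast hcon
      omega
    · rw [hb] at hprop hpdesc
      simp only [if_true] at hprop hpdesc
      have hevi : i ∈ (satEpisode M L lit).events := hev _ (by omega)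
      have hli : satLab M i = i := by unfold satLab; split_ifs <;> omega
      obtain ⟨hts, -⟩ := hsrc i hevi hli hpdesc
      show decide ((m i).ts = (i : ℤ)) = true
      exact decide_eq_true hts
  · rintro ⟨τ, hτ⟩
    have hch : ∀ j, ∃ k, j < L → k < 3 ∧ τ (lit j k).1 = (lit j k).2 := by
      intro j
      by_cases hj : j < L
      · obtain ⟨k, hk, hkk⟩ := hτ j hj; exact ⟨k, fun _ => ⟨hk, hkk⟩⟩
      · exact ⟨0, fun h => absurd h hj⟩
    choose kj hkj using hch
    have hkj3 : ∀ j < L, kj j < 3 := fun j hj => (hkj j hj).1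
    refine ⟨fun e => ⟨satPos M L τ kj e, satSeqLab M L (satPos M L τ kj e),
      (satPos M L τ kj e : ℤ)⟩, ?_, ?_, ?_, ?_, ?_, ?_⟩
    · intro e he
      have he' : e < 2*M + 3*L := by simpa [satEpisode] using he
      exact mem_satSeq.mpr ⟨satPos M L τ kj e, satPos_lt he', rfl⟩
    · intro a ha b hb h
      have ha' : a < 2*M + 3*L := by simpa [satEpisode] using ha
      have hb' : b < 2*M + 3*L := by simpa [satEpisode] using hb
      have : satPos M L τ kj a = satPos M L τ kj b := congrArg SeqEvent.id h
      exact satPos_injOn hkj3 ha' hb' this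
    · intro e he
      have he' : e < 2*M + 3*L := by simpa [satEpisode] using he
      simpa [satEpisode] using satSeqLab_satPos (τ := τ) (kj := kj) he'
    · intro e _ f _ hef
      have : e = f := hef
      rw [this]
    · intro e he f hf hdesc
      have hp := (satDesc_iff hvar _ _).mp hdesc
      have := satPos_order hvar hkj hp
      simp only
      exact_mod_cast this.le
    · intro e he f hf hpdesc
      have hp := (satPDesc_iff hvar _ _).mp hpdesc
      have := satPos_order hvar hkj hp
      simp only
      exact_mod_cast this
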